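/- arXiv:1108.3415 — 2 statements merged into one kernel-verified Lean document; each statement's English description precedes it below -/
import Mathlib

section
/- Let U = {X_0, …, X_{L−1}} be an (N,M,L)-FHS set with N ≥ 2 and L ≥ 2. Then (as rational numbers) A_a(U)/(N(L−1)) + A_c(U)/(N−1) ≥ (NL−M)/(M(N−1)(L−1)), where A_a(U) = S_a(U)/(L(N−1)) and A_c(U) = S_c(U)/(L(L−1)N). -/
open Finset

/-- Periodic Hamming correlation of two FHSs `X, Y : ZMod N → F` at shift `τ`. -/
def Hcorr {N : ℕ} [NeZero N] {F : Type*} [DecidableEq F]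
    (X Y : ZMod N → F) (τ : ZMod N) : ℕ :=
  (Finset.univ.filter (fun t => X t = Y (t + τ))).card

/-- `N_X(a)`: number of occurrences of frequency `a` in the FHS `X`. -/
def countFreq {N : ℕ} [NeZero N] {F : Type*} [DecidableEq F]
    (X : ZMod N → F) (a : F) : ℕ :=
  (Finset.univ.filter (fun t => X t = a)).card

/-- `N_U(a)`: total number of occurrences of `a` in the FHS set `U`. -/
def countFreqSet {N L : ℕ} [NeZero N] {F : Type*} [DecidableEq F]
    (U : Fin L → ZMod N → F) (a : F) : ℕ :=
  ∑ i : Fin L, countFreq (U i) a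

/-- `S_a(U)`: sum of all out-of-phase Hamming autocorrelation values. -/
def Sa {N L : ℕ} [NeZero N] {F : Type*} [DecidableEq F]
    (U : Fin L → ZMod N → F) : ℕ :=
  ∑ i : Fin L, ∑ τ ∈ Finset.univ \ {(0 : ZMod N)}, Hcorr (U i) (U i) τ

/-- `S_c(U)`: sum of all Hamming crosscorrelation values (ordered pairs `i ≠ j`). -/
def Sc {N L : ℕ} [NeZero N] {F : Type*} [DecidableEq F]
    (U : Fin L → ZMod N → F) : ℕ :=
  ∑ i : Fin L, ∑ j ∈ Finset.univ \ {i}, ∑ τ : ZMod N, Hcorr (U i) (U j) τ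

/-- Average Hamming autocorrelation `A_a(U) = S_a(U)/(L(N-1))`. -/
def Aa {N L : ℕ} [NeZero N] {F : Type*} [DecidableEq F]
    (U : Fin L → ZMod N → F) : ℚ :=
  (Sa U : ℚ) / ((L : ℚ) * ((N : ℚ) - 1))

/-- Average Hamming crosscorrelation `A_c(U) = S_c(U)/(L(L-1)N)`. -/
def Ac {N L : ℕ} [NeZero N] {F : Type*} [DecidableEq F]
    (U : Fin L → ZMod N → F) : ℚ :=
  (Sc U : ℚ) / ((L : ℚ) * ((L : ℚ) - 1) * (N : ℚ))

/-- `H_a(U)`: maximum out-of-phase Hamming autocorrelation of the set `U`. -/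
def Ha {N L : ℕ} [NeZero N] {F : Type*} [DecidableEq F]
    (U : Fin L → ZMod N → F) : ℕ :=
  Finset.univ.sup fun i => (Finset.univ \ {(0 : ZMod N)}).sup fun τ => Hcorr (U i) (U i) τ

/-- `H_c(U)`: maximum Hamming crosscorrelation of the set `U`. -/
def Hc {N L : ℕ} [NeZero N] {F : Type*} [DecidableEq F]
    (U : Fin L → ZMod N → F) : ℕ :=
  Finset.univ.sup fun i => (Finset.univ \ {i}).sup fun j =>
    Finset.univ.sup fun τ => Hcorr (U i) (U j) τ

/-- `U` has optimal average Hamming correlation (meets the Peng et al. AHC bound with equality). -/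
def optimalAHC {N L : ℕ} [NeZero N] {F : Type*} [Fintype F] [DecidableEq F]
    (U : Fin L → ZMod N → F) : Prop :=
  Aa U / ((N : ℚ) * ((L : ℚ) - 1)) + Ac U / ((N : ℚ) - 1)
    = ((N : ℚ) * L - Fintype.card F) /
      ((Fintype.card F : ℚ) * ((N : ℚ) - 1) * ((L : ℚ) - 1))

/-- The cyclotomic class `C_r = {α^(Ml+r) : 0 ≤ l ≤ f-1}`. -/
def cycClass {F : Type*} [Monoid F] [DecidableEq F] (α : F) (M f r : ℕ) : Finset F :=
  (Finset.range f).image fun l => α ^ (M * l + r)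

/-- The cyclotomic number `(i,j)_M = |(C_i + 1) ∩ C_j|`. -/
def cycNum {F : Type*} [Field F] [DecidableEq F] (α : F) (M f i j : ℕ) : ℕ :=
  (((cycClass α M f i).image fun x => x + 1) ∩ cycClass α M f j).card


section Aux

variable {N : ℕ} [NeZero N] {F : Type*} [Fintype F] [DecidableEq F]

lemma sum_Hcorr (X Y : ZMod N → F) :
    ∑ τ : ZMod N, Hcorr X Y τ = ∑ a : F, countFreq X a * countFreq Y a := by
  have h1 : ∀ t : ZMod N, (∑ τ : ZMod N, if X t = Y (t + τ) then 1 else 0)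
      = countFreq Y (X t) := by
    intro t
    rw [countFreq, Finset.card_filter]
    exact Fintype.sum_equiv (Equiv.addLeft t) _ _ (fun τ => by simp [eq_comm])
  have h2 : ∑ τ : ZMod N, Hcorr X Y τ = ∑ t : ZMod N, countFreq Y (X t) := by
    simp_rw [Hcorr, Finset.card_filter]
    rw [Finset.sum_comm]
    exact Finset.sum_congr rfl fun t _ => h1 t
  rw [h2, ← Finset.sum_fiberwise Finset.univ X (fun t => countFreq Y (X t))]
  refine Finset.sum_congr rfl fun a _ => ?_
  have : ∀ t ∈ Finset.univ.filter (fun t => X t = a),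
      countFreq Y (X t) = countFreq Y a := by
    intro t ht
    rw [Finset.mem_filter] at ht
    rw [ht.2]
  rw [Finset.sum_congr rfl this, Finset.sum_const, smul_eq_mul]
  rfl

lemma Hcorr_zero (X : ZMod N → F) : Hcorr X X 0 = N := by
  simp [Hcorr, ZMod.card]

lemma sum_countFreq (X : ZMod N → F) : ∑ a : F, countFreq X a = N := by
  have h : (Finset.univ : Finset (ZMod N)).card = ∑ a : F, countFreq X a :=
    Finset.card_eq_sum_card_fiberwise (fun x _ => Finset.mem_univ (X x))
  rw [← h, Finset.card_univ, ZMod.card]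

variable {L : ℕ}

lemma key_identity (U : Fin L → ZMod N → F) :
    Sa U + Sc U + L * N = ∑ a : F, (countFreqSet U a) ^ 2 := by
  have hT : ∑ i : Fin L, ∑ j : Fin L, ∑ τ : ZMod N, Hcorr (U i) (U j) τ
      = ∑ a : F, (countFreqSet U a) ^ 2 := by
    simp_rw [sum_Hcorr, countFreqSet, sq, Finset.sum_mul_sum]
    have h1 : ∀ i : Fin L, ∑ j : Fin L, ∑ a : F,
        countFreq (U i) a * countFreq (U j) a
        = ∑ a : F, ∑ j : Fin L, countFreq (U i) a * countFreq (U j) a :=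
      fun i => Finset.sum_comm
    rw [Finset.sum_congr rfl (fun i _ => h1 i)]
    exact Finset.sum_comm
  rw [← hT]
  have hsplit : ∀ i : Fin L, ∑ j : Fin L, ∑ τ : ZMod N, Hcorr (U i) (U j) τ
      = (∑ j ∈ Finset.univ \ {i}, ∑ τ : ZMod N, Hcorr (U i) (U j) τ)
        + ∑ τ : ZMod N, Hcorr (U i) (U i) τ := fun i =>
    Finset.sum_eq_sum_sdiff_singleton_add (Finset.mem_univ i) _
  have hτ : ∀ i : Fin L, ∑ τ : ZMod N, Hcorr (U i) (U i) τ
      = (∑ τ ∈ Finset.univ \ {(0 : ZMod N)}, Hcorr (U i) (U i) τ) + N := by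
    intro i
    rw [Finset.sum_eq_sum_sdiff_singleton_add (Finset.mem_univ (0 : ZMod N)), Hcorr_zero]
  simp_rw [hsplit, hτ]
  rw [Finset.sum_add_distrib, Finset.sum_add_distrib, Sa, Sc, Finset.sum_const,
    Finset.card_univ, Fintype.card_fin, smul_eq_mul]
  ring

lemma sum_countFreqSet (U : Fin L → ZMod N → F) :
    ∑ a : F, countFreqSet U a = L * N := by
  simp_rw [countFreqSet]
  rw [Finset.sum_comm]
  simp [sum_countFreq, Finset.sum_const]

end Aux

set_option maxHeartbeats 800000 in
/-- the Peng et al. bound on the average Hamming correlation. -/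
theorem average_hamming_correlation_bound {N M L : ℕ} [NeZero N] (hN : 2 ≤ N) (hL : 2 ≤ L)
    {F : Type*} [Fintype F] [DecidableEq F] (hM : Fintype.card F = M)
    (U : Fin L → ZMod N → F) :
    ((N : ℚ) * (L : ℚ) - (M : ℚ)) / ((M : ℚ) * ((N : ℚ) - 1) * ((L : ℚ) - 1))
      ≤ Aa U / ((N : ℚ) * ((L : ℚ) - 1)) + Ac U / ((N : ℚ) - 1) := by
  have hF : Nonempty F := ⟨U ⟨0, by omega⟩ 0⟩
  have hM1 : 1 ≤ M := hM ▸ Fintype.card_pos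
  have hcs := sq_sum_le_card_mul_sum_sq (s := Finset.univ)
    (f := fun a : F => (countFreqSet U a : ℚ))
  have e1 : ∑ a : F, (countFreqSet U a : ℚ) = ((L * N : ℕ) : ℚ) := by
    rw [← Nat.cast_sum, sum_countFreqSet]
  have e2 : ∑ a : F, (countFreqSet U a : ℚ) ^ 2
      = ((Sa U + Sc U + L * N : ℕ) : ℚ) := by
    norm_cast
    exact (key_identity U).symm
  rw [e1, e2, Finset.card_univ, hM] at hcs
  push_cast at hcs
  have hn2 : (2 : ℚ) ≤ (N : ℚ) := by exact_mod_cast hN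
  have hl2 : (2 : ℚ) ≤ (L : ℚ) := by exact_mod_cast hL
  have hm1 : (1 : ℚ) ≤ (M : ℚ) := by exact_mod_cast hM1
  set n : ℚ := (N : ℚ) with hn
  set l : ℚ := (L : ℚ) with hl
  set m : ℚ := (M : ℚ) with hmm
  set sa : ℚ := (Sa U : ℚ) with hsa
  set sc : ℚ := (Sc U : ℚ) with hsc
  have hsa0 : 0 ≤ sa := by positivity
  have hsc0 : 0 ≤ sc := by positivity
  have hmp : (0 : ℚ) < m := by linarith
  have hnp : (0 : ℚ) < n := by linarith
  have hlp : (0 : ℚ) < l := by linarith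
  have hn1 : (0 : ℚ) < n - 1 := by linarith
  have hl1 : (0 : ℚ) < l - 1 := by linarith
  have hd1 : (0 : ℚ) < m * (n - 1) * (l - 1) := mul_pos (mul_pos hmp hn1) hl1
  have hd2 : (0 : ℚ) < l * n * (n - 1) * (l - 1) :=
    mul_pos (mul_pos (mul_pos hlp hnp) hn1) hl1
  have hrhs : Aa U / (n * (l - 1)) + Ac U / (n - 1)
      = (sa + sc) / (l * n * (n - 1) * (l - 1)) := by
    rw [Aa, Ac, ← hsa, ← hsc, ← hn, ← hl]
    field_simp
  rw [hrhs, div_le_div_iff₀ hd1 hd2]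
  have h2 : (n * l - m) * (l * n) ≤ m * (sa + sc) := by nlinarith [hcs]
  have h3 := mul_le_mul_of_nonneg_right h2
    (show (0 : ℚ) ≤ (n - 1) * (l - 1) from le_of_lt (mul_pos hn1 hl1))
  calc (n * l - m) * (l * n * (n - 1) * (l - 1))
      = (n * l - m) * (l * n) * ((n - 1) * (l - 1)) := by ring
    _ ≤ m * (sa + sc) * ((n - 1) * (l - 1)) := h3
    _ = (sa + sc) * (m * (n - 1) * (l - 1)) := by ring
end

section
/- Let U = {X_0, …, X_{L−1}} be a uniformly distributed (N,M,L)-FHS set over F with N ≥ 2 and L ≥ 2 (so that M divides NL and N_U(a) = NL/M for every a ∈ F). Then U has optimal average Hamming correlation, i.e., A_a(U)/(N(L−1)) + A_c(U)/(N−1) = (NL−M)/(M(N−1)(L−1)). -/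
open Finset

lemma sum_Hcorr_eq {N : ℕ} [NeZero N] {F : Type*} [Fintype F] [DecidableEq F]
    (X Y : ZMod N → F) :
    ∑ τ : ZMod N, Hcorr X Y τ = ∑ a : F, countFreq X a * countFreq Y a := by
  have h1 : ∑ τ : ZMod N, Hcorr X Y τ = ∑ t : ZMod N, countFreq Y (X t) := by
    unfold Hcorr countFreq
    simp only [Finset.card_filter]
    rw [Finset.sum_comm]
    refine Finset.sum_congr rfl fun t _ => ?_
    rw [Fintype.sum_equiv (Equiv.addLeft t)
      (fun τ => if X t = Y (t + τ) then 1 else 0)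
      (fun s => if X t = Y s then 1 else 0) (fun τ => rfl)]
    simp [eq_comm]
  rw [h1, ← Finset.sum_fiberwise Finset.univ X (fun t => countFreq Y (X t))]
  refine Finset.sum_congr rfl fun a _ => ?_
  have hcg : ∀ t ∈ Finset.univ.filter (fun t => X t = a),
      countFreq Y (X t) = countFreq Y a := fun t ht => by
    rw [(Finset.mem_filter.mp ht).2]
  rw [Finset.sum_congr rfl hcg, Finset.sum_const, smul_eq_mul]
  rfl

lemma sum_countFreq_eq {N : ℕ} [NeZero N] {F : Type*} [Fintype F] [DecidableEq F]
    (X : ZMod N → F) : ∑ a : F, countFreq X a = N := by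
  have := Finset.card_eq_sum_card_fiberwise
    (f := X) (s := (Finset.univ : Finset (ZMod N))) (t := Finset.univ)
    (fun x _ => Finset.mem_univ _)
  simpa [countFreq, ZMod.card] using this.symm

lemma Hcorr_self_zero {N : ℕ} [NeZero N] {F : Type*} [DecidableEq F]
    (X : ZMod N → F) : Hcorr X X 0 = N := by
  unfold Hcorr
  simp [ZMod.card]

/-- Theorem 6, a uniformly distributed FHS set has optimal AHC. -/
theorem uniformly_distributed_optimal_AHC {N M L : ℕ} [NeZero N] (hN : 2 ≤ N) (hL : 2 ≤ L)
    {F : Type*} [Fintype F] [DecidableEq F] (hM : Fintype.card F = M)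
    (U : Fin L → ZMod N → F)
    (hud : ∀ a b : F, countFreqSet U a = countFreqSet U b) :
    Aa U / ((N : ℚ) * ((L : ℚ) - 1)) + Ac U / ((N : ℚ) - 1)
      = ((N : ℚ) * (L : ℚ) - (M : ℚ)) / ((M : ℚ) * ((N : ℚ) - 1) * ((L : ℚ) - 1)) := by
  classical
  -- the common value of `countFreqSet`
  have hL0 : 0 < L := by omega
  set a0 : F := U ⟨0, hL0⟩ 0 with ha0
  set c : ℕ := countFreqSet U a0 with hc
  have hcval : ∀ a : F, countFreqSet U a = c := fun a => hud a a0
  -- total count: M * c = N * L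
  have hMpos : 0 < M := by
    rw [← hM]
    exact Fintype.card_pos_iff.mpr ⟨a0⟩
  have htot : M * c = N * L := by
    have h1 : ∑ a : F, countFreqSet U a = N * L := by
      unfold countFreqSet
      rw [Finset.sum_comm]
      simp [sum_countFreq_eq, mul_comm]
    calc M * c = ∑ _a : F, c := by rw [Finset.sum_const, Finset.card_univ, hM, smul_eq_mul]
    _ = ∑ a : F, countFreqSet U a := by simp [hcval]
    _ = N * L := h1
  -- total correlation sum
  set T : Fin L → Fin L → ℕ := fun i j => ∑ τ : ZMod N, Hcorr (U i) (U j) τ with hT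
  have hS : ∑ i : Fin L, ∑ j : Fin L, T i j = M * c ^ 2 := by
    have : ∀ i j, T i j = ∑ a : F, countFreq (U i) a * countFreq (U j) a :=
      fun i j => sum_Hcorr_eq _ _
    calc ∑ i : Fin L, ∑ j : Fin L, T i j
        = ∑ i : Fin L, ∑ a : F, ∑ j : Fin L, countFreq (U i) a * countFreq (U j) a := by
          simp only [this]
          exact Finset.sum_congr rfl fun i _ => Finset.sum_comm
      _ = ∑ a : F, ∑ i : Fin L, ∑ j : Fin L, countFreq (U i) a * countFreq (U j) a :=
          Finset.sum_comm
      _ = ∑ a : F, (∑ i : Fin L, countFreq (U i) a) * (∑ j : Fin L, countFreq (U j) a) := by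
          refine Finset.sum_congr rfl fun a _ => ?_
          rw [Finset.sum_mul_sum]
      _ = ∑ a : F, c * c := by
          refine Finset.sum_congr rfl fun a _ => ?_
          rw [show (∑ i : Fin L, countFreq (U i) a) = countFreqSet U a from rfl, hcval]
      _ = M * c ^ 2 := by
          rw [Finset.sum_const, Finset.card_univ, hM, smul_eq_mul]; ring
  -- Sa in terms of T
  have hSa : Sa U + L * N = ∑ i : Fin L, T i i := by
    unfold Sa
    rw [show L * N = ∑ _i : Fin L, N by simp [mul_comm], ← Finset.sum_add_distrib]
    refine Finset.sum_congr rfl fun i _ => ?_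
    have h := Finset.sum_sdiff (f := fun τ => Hcorr (U i) (U i) τ)
      (Finset.subset_univ {(0 : ZMod N)})
    rw [Finset.sum_singleton, Hcorr_self_zero] at h
    exact h
  have hSa' : (Sa U : ℕ) = ∑ i : Fin L, T i i - L * N := by omega
  -- Sc in terms of T
  have hSc : Sc U + ∑ i : Fin L, T i i = ∑ i : Fin L, ∑ j : Fin L, T i j := by
    unfold Sc
    rw [← Finset.sum_add_distrib]
    refine Finset.sum_congr rfl fun i _ => ?_
    have hsub : ({i} : Finset (Fin L)) ⊆ Finset.univ := Finset.subset_univ _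
    have := Finset.sum_sdiff (f := fun j => T i j) hsub
    rw [← this, Finset.sum_singleton]
  have hkey : Sa U + Sc U + L * N = M * c ^ 2 := by omega
  -- pass to ℚ
  have hkeyQ : (Sa U : ℚ) + (Sc U : ℚ) + (L : ℚ) * (N : ℚ) = (M : ℚ) * (c : ℚ) ^ 2 := by
    exact_mod_cast congrArg (Nat.cast : ℕ → ℚ) hkey
  have htotQ : (M : ℚ) * (c : ℚ) = (N : ℚ) * (L : ℚ) := by exact_mod_cast htot
  have hN0 : (N : ℚ) ≠ 0 := by positivity
  have hN1 : (N : ℚ) - 1 ≠ 0 := by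
    have : (2 : ℚ) ≤ (N : ℚ) := by exact_mod_cast hN
    linarith
  have hL0' : (L : ℚ) ≠ 0 := by positivity
  have hL1 : (L : ℚ) - 1 ≠ 0 := by
    have : (2 : ℚ) ≤ (L : ℚ) := by exact_mod_cast hL
    linarith
  have hM0 : (M : ℚ) ≠ 0 := by
    have : (0 : ℚ) < (M : ℚ) := by exact_mod_cast hMpos
    linarith
  have hfin : (M : ℚ) * ((Sa U : ℚ) + (Sc U : ℚ))
      = ((N : ℚ) * (L : ℚ) - (M : ℚ)) * ((L : ℚ) * (N : ℚ)) := by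
    linear_combination (M : ℚ) * hkeyQ + ((M : ℚ) * (c : ℚ) + (N : ℚ) * (L : ℚ)) * htotQ
  unfold Aa Ac
  field_simp
  linear_combination hfin
end
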